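/- Let G_n = a_1(n) α_1^n + ⋯ + a_t(n) α_t^n be a non-degenerate linear recurrence sequence of polynomials G_n ∈ ℂ[x], where α_1, …, α_t ∈ ℂ[x] are nonzero polynomials such that α_i/α_j ∉ ℂ for i ≠ j, and a_1, …, a_t are nonzero polynomials with coefficients in ℂ(x) (or a finite extension). Then there exists a constant C, independent of n, such that for all sufficiently large n: deg G_n ≥ n · max_{j=1,…,t} deg α_j − C. -/

import Mathlib

open Polynomial


noncomputable def dmap (B : Polynomial (Polynomial ℂ)) : Polynomial (Polynomial ℂ) :=
  ⟨AddMonoidAlgebra.ofCoeff (B.toFinsupp.coeff.mapRange (fun p => derivative p) (by simp))⟩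

lemma dmap_coeff (B : Polynomial (Polynomial ℂ)) (k : ℕ) :
    (dmap B).coeff k = derivative (B.coeff k) := by
  rcases B with ⟨B⟩
  simp [dmap, Polynomial.coeff]

lemma dmap_add (B₁ B₂ : Polynomial (Polynomial ℂ)) :
    dmap (B₁ + B₂) = dmap B₁ + dmap B₂ := by
  ext k
  simp [dmap_coeff]

lemma dmap_monomial (k : ℕ) (c : Polynomial ℂ) :
    dmap (monomial k c) = monomial k (derivative c) := by
  ext m
  simp only [dmap_coeff, coeff_monomial]
  split <;> simp

lemma natDegree_dmap_le (B : Polynomial (Polynomial ℂ)) :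
    (dmap B).natDegree ≤ B.natDegree := by
  apply Polynomial.natDegree_le_iff_coeff_eq_zero.mpr
  intro m hm
  rw [dmap_coeff, Polynomial.coeff_eq_zero_of_natDegree_lt hm, map_zero]

lemma derivative_eval_dmap (B : Polynomial (Polynomial ℂ)) (a : Polynomial ℂ)
    (ha : derivative a = 0) :
    derivative (B.eval a) = (dmap B).eval a := by
  induction B using Polynomial.induction_on' with
  | add p q hp hq => rw [dmap_add, eval_add, eval_add, derivative_add, hp, hq]
  | monomial k c =>
    rw [dmap_monomial, eval_monomial, eval_monomial, derivative_mul, derivative_pow, ha]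
    ring

lemma natDegree_eval_bound (B : Polynomial (Polynomial ℂ)) :
    ∃ E : ℕ, ∀ a : Polynomial ℂ, a.natDegree = 0 → (B.eval a).natDegree ≤ E := by
  induction B using Polynomial.induction_on' with
  | add p q hp hq =>
    obtain ⟨E₁, h₁⟩ := hp; obtain ⟨E₂, h₂⟩ := hq
    refine ⟨max E₁ E₂, fun a ha => ?_⟩
    rw [eval_add]
    exact le_trans (natDegree_add_le _ _) (max_le_max (h₁ a ha) (h₂ a ha))
  | monomial k c =>
    refine ⟨c.natDegree, fun a ha => ?_⟩
    rw [eval_monomial]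
    refine le_trans (natDegree_mul_le) ?_
    have : (a ^ k).natDegree ≤ 0 := le_trans (natDegree_pow_le) (by simp [ha])
    omega

lemma eval_natCast_ne_zero (B : Polynomial (Polynomial ℂ)) (hB : B ≠ 0) :
    ∃ N : ℕ, ∀ n ≥ N, B.eval ((n : ℕ) : Polynomial ℂ) ≠ 0 := by
  have hfin : Set.Finite {x : Polynomial ℂ | B.IsRoot x} := Polynomial.finite_setOf_isRoot hB
  have hinj : Function.Injective (fun n : ℕ => ((n : ℕ) : Polynomial ℂ)) :=
    fun a b hab => Nat.cast_injective hab
  have hfin2 : Set.Finite {n : ℕ | B.eval ((n : ℕ) : Polynomial ℂ) = 0} := by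
    apply Set.Finite.preimage (Function.Injective.injOn hinj) hfin
  obtain ⟨N, hN⟩ := hfin2.bddAbove
  refine ⟨N + 1, fun n hn h => ?_⟩
  have := hN (show n ∈ {n : ℕ | B.eval ((n : ℕ) : Polynomial ℂ) = 0} from h)
  omega


lemma const_of_dvd_derivative {p : Polynomial ℂ} (hp : p ≠ 0) (h : p ∣ derivative p) :
    ∃ c : ℂ, p = C c := by
  by_cases hd : p.natDegree = 0
  · exact ⟨p.coeff 0, Polynomial.eq_C_of_natDegree_eq_zero hd⟩
  · by_cases hdz : derivative p = 0
    · exact absurd (Polynomial.natDegree_eq_zero_of_derivative_eq_zero hdz) hd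
    · have h1 := Polynomial.natDegree_le_of_dvd h hdz
      have h2 := Polynomial.natDegree_derivative_lt hd
      omega

lemma prop_of_wronskian_zero {p q : Polynomial ℂ} (hp : p ≠ 0) (hq : q ≠ 0)
    (h : p * derivative q - derivative p * q = 0) : ∃ c : ℂ, q = c • p := by
  have h' : p * derivative q = derivative p * q := sub_eq_zero.mp h
  set g := GCDMonoid.gcd p q with hg
  have hgne : g ≠ 0 := gcd_ne_zero_of_left hp
  set p₁ := p / g with hp1
  set q₁ := q / g with hq1
  have hpe : g * p₁ = p := EuclideanDomain.mul_div_cancel' hgne (gcd_dvd_left p q)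
  have hqe : g * q₁ = q := EuclideanDomain.mul_div_cancel' hgne (gcd_dvd_right p q)
  have hcop : IsCoprime p₁ q₁ := isCoprime_div_gcd_div_gcd hq
  have hp1ne : p₁ ≠ 0 := left_div_gcd_ne_zero hp
  have hq1ne : q₁ ≠ 0 := right_div_gcd_ne_zero hq
  have key : p₁ * derivative q₁ = derivative p₁ * q₁ := by
    have h2 : g * g * (p₁ * derivative q₁ - derivative p₁ * q₁) = 0 := by
      have h3 := h'
      rw [← hpe, ← hqe] at h3
      rw [derivative_mul, derivative_mul] at h3
      linear_combination h3
    have h4 := mul_eq_zero.mp h2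
    rcases h4 with h4 | h4
    · exact absurd h4 (mul_ne_zero hgne hgne)
    · exact sub_eq_zero.mp h4
  have hdp : p₁ ∣ derivative p₁ := hcop.dvd_of_dvd_mul_right
    ⟨derivative q₁, by linear_combination key.symm⟩
  have hdq : q₁ ∣ derivative q₁ := (hcop.symm).dvd_of_dvd_mul_right
    ⟨derivative p₁, by linear_combination key⟩
  obtain ⟨c₁, hc₁⟩ := const_of_dvd_derivative hp1ne hdp
  obtain ⟨c₂, hc₂⟩ := const_of_dvd_derivative hq1ne hdq
  have hc₁ne : c₁ ≠ 0 := by rintro rfl; rw [map_zero] at hc₁; exact hp1ne hc₁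
  refine ⟨c₂ * c₁⁻¹, ?_⟩
  rw [Polynomial.smul_eq_C_mul, ← hpe, ← hqe, hc₁, hc₂]
  have hcc : (c₂ * c₁⁻¹) * c₁ = c₂ := by field_simp
  conv_lhs => rw [← hcc, map_mul]
  ring

lemma key_lemma {ι : Type*} [DecidableEq ι] (α : ι → Polynomial ℂ) :
    ∀ S : Finset ι, S.Nonempty → (∀ j ∈ S, α j ≠ 0) →
    (∀ i ∈ S, ∀ j ∈ S, i ≠ j → ∀ c : ℂ, α i ≠ c • α j) →
    ∀ B : ι → Polynomial (Polynomial ℂ), (∀ j ∈ S, B j ≠ 0) →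
    ∃ C : ℤ, ∃ N : ℕ, ∀ n ≥ N,
      (∑ j ∈ S, (B j).eval ((n : ℕ) : Polynomial ℂ) * α j ^ n) ≠ 0 ∧
      (n : ℤ) * (S.sup fun j => (α j).natDegree) - C ≤
        ((∑ j ∈ S, (B j).eval ((n : ℕ) : Polynomial ℂ) * α j ^ n).natDegree : ℤ) := by
  intro S
  induction S using Finset.strongInduction with
  | _ S ih =>
    intro hS hα hnd B hB
    obtain ⟨j₀, hj₀S, hj₀min⟩ := S.exists_min_image (fun j => (α j).natDegree) hS
    set S' := S.erase j₀ with hS'def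
    by_cases hS' : S'.Nonempty
    · -- inductive step
      have hα₀ : α j₀ ≠ 0 := hα j₀ hj₀S
      have hB₀ : B j₀ ≠ 0 := hB j₀ hj₀S
      set W : ι → Polynomial ℂ :=
        fun j => α j₀ * derivative (α j) - derivative (α j₀) * α j with hWdef
      have hWne : ∀ j ∈ S', W j ≠ 0 := by
        intro j hj hWj
        obtain ⟨hjne, hjS⟩ := Finset.mem_erase.mp hj
        obtain ⟨c, hc⟩ := prop_of_wronskian_zero hα₀ (hα j hjS) hWj
        exact hnd j hjS j₀ hj₀S hjne c hc
      set B' : ι → Polynomial (Polynomial ℂ) := fun j =>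
        C (α j₀) * (B j₀ * dmap (B j) - dmap (B j₀) * B j) * C (α j) +
        C (W j) * (X * (B j₀ * B j)) with hB'def
      have hB'ne : ∀ j ∈ S', B' j ≠ 0 := by
        intro j hj h0
        have hjS := Finset.mem_of_mem_erase hj
        have hBj : B j ≠ 0 := hB j hjS
        have hc : (B' j).coeff ((B j₀).natDegree + (B j).natDegree + 1) =
            W j * ((B j₀).leadingCoeff * (B j).leadingCoeff) := by
          simp only [hB'def]
          rw [coeff_add]
          have h1 : ((C (α j₀) * (B j₀ * dmap (B j) - dmap (B j₀) * B j) *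
              C (α j)).coeff ((B j₀).natDegree + (B j).natDegree + 1)) = 0 := by
            apply coeff_eq_zero_of_natDegree_lt
            have e1 : (B j₀ * dmap (B j) - dmap (B j₀) * B j).natDegree ≤
                (B j₀).natDegree + (B j).natDegree := by
              refine le_trans (natDegree_sub_le _ _) (max_le ?_ ?_)
              · exact le_trans natDegree_mul_le
                  (add_le_add_right (natDegree_dmap_le _) _)
              · exact le_trans natDegree_mul_le
                  (add_le_add_left (natDegree_dmap_le _) _)
            calc (C (α j₀) * (B j₀ * dmap (B j) - dmap (B j₀) * B j) *
                C (α j)).natDegree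
                ≤ (C (α j₀) * (B j₀ * dmap (B j) - dmap (B j₀) * B j)).natDegree
                  + (C (α j)).natDegree := natDegree_mul_le
              _ ≤ ((C (α j₀)).natDegree +
                  (B j₀ * dmap (B j) - dmap (B j₀) * B j).natDegree) + (C (α j)).natDegree :=
                  add_le_add_left natDegree_mul_le _
              _ ≤ (B j₀).natDegree + (B j).natDegree := by
                  rw [natDegree_C, natDegree_C]; omega
              _ < (B j₀).natDegree + (B j).natDegree + 1 := by omega
          rw [h1, zero_add, coeff_C_mul, coeff_X_mul, coeff_mul_degree_add_degree]
        rw [h0, coeff_zero] at hc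
        have : W j * ((B j₀).leadingCoeff * (B j).leadingCoeff) ≠ 0 :=
          mul_ne_zero (hWne j hj)
            (mul_ne_zero (leadingCoeff_ne_zero.mpr hB₀) (leadingCoeff_ne_zero.mpr hBj))
        exact this hc.symm
      set B'' : ι → Polynomial (Polynomial ℂ) := fun j => (B' j).comp (X + 1) with hB''def
      have hB''ne : ∀ j ∈ S', B'' j ≠ 0 := by
        intro j hj h0
        apply hB'ne j hj
        apply Polynomial.zero_of_eval_zero
        intro x
        have h2 := congrArg (eval (x - 1)) (show B'' j = 0 from h0)
        simpa [hB''def, eval_comp, sub_add_cancel] using h2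
      have hsub : S' ⊂ S := Finset.erase_ssubset hj₀S
      have hα' : ∀ j ∈ S', α j ≠ 0 := fun j hj => hα j (Finset.mem_of_mem_erase hj)
      have hnd' : ∀ i ∈ S', ∀ j ∈ S', i ≠ j → ∀ c : ℂ, α i ≠ c • α j :=
        fun i hi j hj hij c =>
          hnd i (Finset.mem_of_mem_erase hi) j (Finset.mem_of_mem_erase hj) hij c
      obtain ⟨C', N', hIH⟩ := ih S' hsub hS' hα' hnd' B'' hB''ne
      obtain ⟨E₁, hE₁⟩ := natDegree_eval_bound (B j₀)
      obtain ⟨E₂, hE₂⟩ := natDegree_eval_bound (dmap (B j₀))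
      set D := S.sup fun j => (α j).natDegree with hDdef
      have hsup : (S'.sup fun j => (α j).natDegree) = D := by
        apply le_antisymm (Finset.sup_mono (Finset.erase_subset _ _))
        apply Finset.sup_le
        intro j hjS
        by_cases hjj : j = j₀
        · subst hjj
          obtain ⟨j₁, hj₁⟩ := hS'
          exact le_trans (hj₀min j₁ (Finset.mem_of_mem_erase hj₁)) (Finset.le_sup (f := fun j => (α j).natDegree) hj₁)
        · exact Finset.le_sup (f := fun j => (α j).natDegree) (Finset.mem_erase.mpr ⟨hjj, hjS⟩)
      refine ⟨C' + D + (α j₀).natDegree + E₁ + E₂, N' + 1, fun n hn => ?_⟩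
      obtain ⟨m, rfl⟩ : ∃ m, n = m + 1 := ⟨n - 1, by omega⟩
      set cn : Polynomial ℂ := ((m + 1 : ℕ) : Polynomial ℂ) with hcn
      set H := ∑ j ∈ S, (B j).eval cn * α j ^ (m + 1) with hHdef
      set b₀ := (B j₀).eval cn with hb₀def
      set db₀ := (dmap (B j₀)).eval cn with hdb₀def
      set K := α j₀ * b₀ * derivative H -
        (α j₀ * db₀ + cn * (derivative (α j₀) * b₀)) * H with hKdef
      have hdercn : derivative cn = 0 := by rw [hcn]; exact Polynomial.derivative_natCast
      have hHder : derivative H = ∑ j ∈ S, ((dmap (B j)).eval cn * α j ^ (m + 1) +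
          cn * ((B j).eval cn * (derivative (α j) * α j ^ m))) := by
        rw [hHdef, derivative_sum]
        apply Finset.sum_congr rfl
        intro j hj
        rw [derivative_mul, derivative_pow, derivative_eval_dmap _ _ hdercn,
          Polynomial.C_eq_natCast]
        rw [show (m + 1) - 1 = m from rfl, ← hcn]
        ring
      have hKsum : K = ∑ j ∈ S', (B'' j).eval ((m : ℕ) : Polynomial ℂ) * α j ^ m := by
        have hKsum0 : K = ∑ j ∈ S,
            (α j₀ * b₀ * ((dmap (B j)).eval cn * α j ^ (m + 1) +
              cn * ((B j).eval cn * (derivative (α j) * α j ^ m))) -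
            (α j₀ * db₀ + cn * (derivative (α j₀) * b₀)) *
              ((B j).eval cn * α j ^ (m + 1))) := by
          rw [hKdef, hHder, Finset.mul_sum, hHdef, Finset.mul_sum, ← Finset.sum_sub_distrib]
        rw [hKsum0, ← Finset.add_sum_erase _ _ hj₀S]
        have hterm0 : (α j₀ * b₀ * ((dmap (B j₀)).eval cn * α j₀ ^ (m + 1) +
              cn * ((B j₀).eval cn * (derivative (α j₀) * α j₀ ^ m))) -
            (α j₀ * db₀ + cn * (derivative (α j₀) * b₀)) *
              ((B j₀).eval cn * α j₀ ^ (m + 1))) = 0 := by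
          rw [← hb₀def, ← hdb₀def, pow_succ]
          ring
        rw [hterm0, zero_add]
        apply Finset.sum_congr rfl
        intro j hj
        have hBev : (B'' j).eval ((m : ℕ) : Polynomial ℂ) = (B' j).eval cn := by
          show ((B' j).comp (X + 1)).eval ((m : ℕ) : Polynomial ℂ) = (B' j).eval cn
          rw [eval_comp]
          congr 1
          rw [eval_add, eval_X, eval_one, hcn]
          push_cast
          ring
        rw [hBev]
        simp only [hB'def, hWdef]
        simp only [eval_add, eval_mul, eval_sub, eval_C, eval_X]
        rw [← hb₀def, ← hdb₀def, pow_succ]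
        ring
      have hIHm := hIH m (by omega)
      rw [← hKsum, hsup] at hIHm
      obtain ⟨hKne, hKdeg⟩ := hIHm
      have hHne : H ≠ 0 := by
        intro h0
        apply hKne
        rw [hKdef, h0]
        simp
      have hb₀le : b₀.natDegree ≤ E₁ := hE₁ cn (by rw [hcn]; exact natDegree_natCast _)
      have hdb₀le : db₀.natDegree ≤ E₂ := hE₂ cn (by rw [hcn]; exact natDegree_natCast _)
      have hKle : K.natDegree ≤ (α j₀).natDegree + E₁ + E₂ + H.natDegree := by
        rw [hKdef]
        refine le_trans (natDegree_sub_le _ _) (max_le ?_ ?_)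
        · calc (α j₀ * b₀ * derivative H).natDegree
              ≤ (α j₀ * b₀).natDegree + (derivative H).natDegree := natDegree_mul_le
            _ ≤ ((α j₀).natDegree + b₀.natDegree) + (derivative H).natDegree :=
                add_le_add_left natDegree_mul_le _
            _ ≤ ((α j₀).natDegree + E₁) + H.natDegree := by
                have h3 := Polynomial.natDegree_derivative_le H
                omega
            _ ≤ (α j₀).natDegree + E₁ + E₂ + H.natDegree := by omega
        · calc ((α j₀ * db₀ + cn * (derivative (α j₀) * b₀)) * H).natDegree
              ≤ (α j₀ * db₀ + cn * (derivative (α j₀) * b₀)).natDegree + H.natDegree :=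
                natDegree_mul_le
            _ ≤ (α j₀).natDegree + E₁ + E₂ + H.natDegree := by
                have h4 : (α j₀ * db₀).natDegree ≤ (α j₀).natDegree + E₂ :=
                  le_trans natDegree_mul_le (by omega)
                have h5 : (cn * (derivative (α j₀) * b₀)).natDegree ≤
                    (α j₀).natDegree + E₁ := by
                  refine le_trans natDegree_mul_le ?_
                  have h6 : (derivative (α j₀) * b₀).natDegree ≤
                      (α j₀).natDegree + E₁ := by
                    refine le_trans natDegree_mul_le ?_
                    have h7 := Polynomial.natDegree_derivative_le (α j₀)
                    omega
                  have h8 : (cn).natDegree = 0 := by rw [hcn]; exact natDegree_natCast _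
                  omega
                have h9 := natDegree_add_le (α j₀ * db₀) (cn * (derivative (α j₀) * b₀))
                omega
      refine ⟨hHne, ?_⟩
      have hcast : (K.natDegree : ℤ) ≤ ((α j₀).natDegree : ℤ) + E₁ + E₂ + H.natDegree := by
        exact_mod_cast hKle
      push_cast
      push_cast at hKdeg
      linarith
    · -- base case : S = {j₀}
      have hSsing : S = {j₀} := by
        apply Finset.eq_singleton_iff_unique_mem.mpr
        refine ⟨hj₀S, fun x hx => ?_⟩
        by_contra hxne
        exact hS' ⟨x, Finset.mem_erase.mpr ⟨hxne, hx⟩⟩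
      subst hSsing
      obtain ⟨N₀, hN₀⟩ := eval_natCast_ne_zero (B j₀) (hB j₀ hj₀S)
      refine ⟨0, N₀, fun n hn => ?_⟩
      rw [Finset.sum_singleton, Finset.sup_singleton]
      have hb := hN₀ n hn
      have hαn : α j₀ ^ n ≠ 0 := pow_ne_zero _ (hα j₀ hj₀S)
      refine ⟨mul_ne_zero hb hαn, ?_⟩
      rw [natDegree_mul hb hαn, natDegree_pow]
      push_cast
      have : (0 : ℤ) ≤ ((B j₀).eval ((n : ℕ) : Polynomial ℂ)).natDegree := Int.natCast_nonneg _
      linarith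

/-- Corollary 1: for a non-degenerate linear recurrence sequence of polynomials
`G_n = a_1(n) α_1^n + ⋯ + a_t(n) α_t^n` with polynomial characteristic roots,
there is a constant `C` such that `deg G_n ≥ n · max_j deg α_j − C` for all
sufficiently large `n`. -/
theorem degree_lower_bound_poly_power_sum
    (t : ℕ) (ht : 0 < t)
    (α : Fin t → Polynomial ℂ) (hα : ∀ j, α j ≠ 0)
    (hnondeg : ∀ i j : Fin t, i ≠ j → ∀ c : ℂ, α i ≠ c • α j)
    (a : Fin t → Polynomial (RatFunc ℂ)) (ha : ∀ j, a j ≠ 0)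
    (G : ℕ → Polynomial ℂ)
    (hG : ∀ n : ℕ, algebraMap (Polynomial ℂ) (RatFunc ℂ) (G n) =
      ∑ j, (a j).eval ((n : RatFunc ℂ)) *
        (algebraMap (Polynomial ℂ) (RatFunc ℂ) (α j)) ^ n) :
    ∃ C : ℤ, ∃ N : ℕ, ∀ n ≥ N,
      (n : ℤ) * (Finset.univ.sup fun j => (α j).natDegree) - C ≤ ((G n).natDegree : ℤ) := by
  set φ := algebraMap (Polynomial ℂ) (RatFunc ℂ) with hφ
  have hφinj : Function.Injective φ := IsFractionRing.injective (Polynomial ℂ) (RatFunc ℂ)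
  have hspec : ∀ j : Fin t, ∃ b : nonZeroDivisors (Polynomial ℂ),
      (IsLocalization.integerNormalization (nonZeroDivisors (Polynomial ℂ)) (a j)).map φ =
        (b : Polynomial ℂ) • a j :=
    fun j => IsLocalization.integerNormalization_map_to_map _ _
  choose b hb using hspec
  set B : Fin t → Polynomial (Polynomial ℂ) := fun j =>
    C (∏ i ∈ Finset.univ.erase j, (b i : Polynomial ℂ)) *
      IsLocalization.integerNormalization (nonZeroDivisors (Polynomial ℂ)) (a j) with hBdef
  have hbne : ∀ j, (b j : Polynomial ℂ) ≠ 0 := fun j =>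
    nonZeroDivisors.ne_zero (b j).2
  have hBne : ∀ j ∈ Finset.univ, B j ≠ 0 := by
    intro j _
    apply mul_ne_zero
    · rw [Ne, Polynomial.C_eq_zero]
      exact Finset.prod_ne_zero_iff.mpr fun i _ => hbne i
    · rw [Ne, IsFractionRing.integerNormalization_eq_zero_iff]
      exact ha j
  set d : Polynomial ℂ := ∏ i, (b i : Polynomial ℂ) with hddef
  have hdne : d ≠ 0 := Finset.prod_ne_zero_iff.mpr fun i _ => hbne i
  have hid : ∀ n : ℕ, d * G n = ∑ j, (B j).eval ((n : ℕ) : Polynomial ℂ) * α j ^ n := by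
    intro n
    apply hφinj
    rw [map_mul, hG n, map_sum, Finset.mul_sum]
    apply Finset.sum_congr rfl
    intro j _
    have hev : φ ((B j).eval ((n : ℕ) : Polynomial ℂ)) =
        φ (∏ i ∈ Finset.univ.erase j, (b i : Polynomial ℂ)) *
          (φ (b j : Polynomial ℂ) * (a j).eval ((n : RatFunc ℂ))) := by
      rw [hBdef]
      simp only []
      rw [eval_mul, eval_C, map_mul]
      congr 1
      have h1 : φ ((IsLocalization.integerNormalization (nonZeroDivisors (Polynomial ℂ))
          (a j)).eval ((n : ℕ) : Polynomial ℂ)) =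
          ((IsLocalization.integerNormalization (nonZeroDivisors (Polynomial ℂ))
            (a j)).map φ).eval (φ ((n : ℕ) : Polynomial ℂ)) := by
        rw [eval_map, eval₂_hom]
      rw [h1, hb j]
      rw [show ((b j : Polynomial ℂ) • a j) = Polynomial.C (φ (b j : Polynomial ℂ)) * a j by
        rw [← Polynomial.smul_eq_C_mul, algebraMap_smul]]
      rw [eval_mul, eval_C, map_natCast]
    rw [map_mul, map_pow, hev]
    have hsplit : φ d = φ (∏ i ∈ Finset.univ.erase j, (b i : Polynomial ℂ)) *
        φ (b j : Polynomial ℂ) := by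
      rw [← map_mul, hddef, Finset.prod_erase_mul _ _ (Finset.mem_univ j)]
    rw [hsplit]
    ring
  have huniv : (Finset.univ : Finset (Fin t)).Nonempty := ⟨⟨0, ht⟩, Finset.mem_univ _⟩
  obtain ⟨C₀, N₀, hkey⟩ := key_lemma α Finset.univ huniv (fun j _ => hα j)
    (fun i _ j _ hij c => hnondeg i j hij c) B hBne
  refine ⟨C₀ + d.natDegree, N₀, fun n hn => ?_⟩
  obtain ⟨hne, hdeg⟩ := hkey n hn
  rw [← hid n] at hne hdeg
  have hGne : G n ≠ 0 := fun h => hne (by rw [h, mul_zero])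
  rw [natDegree_mul hdne hGne] at hdeg
  push_cast at hdeg ⊢
  linarith
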